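/- Let G be a connected r-regular graph with r ≥ 2. If the line graph L(G) admits a distance magic labeling, then 2 - r is an eigenvalue of the adjacency matrix of G. -/

import Mathlib

open SimpleGraph Finset Matrix
open scoped Classical

noncomputable def distMagic {V : Type*} [Fintype V] (G : SimpleGraph V) : Prop :=
  ∃ f : V ≃ Fin (Fintype.card V), ∃ k : ℕ,
    ∀ x : V, ∑ y ∈ G.neighborFinset x, ((f y : ℕ) + 1) = k

noncomputable def closedDistMagic {V : Type*} [Fintype V] (G : SimpleGraph V) : Prop :=
  ∃ f : V ≃ Fin (Fintype.card V), ∃ k : ℕ,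
    ∀ x : V, ∑ y ∈ insert x (G.neighborFinset x), ((f y : ℕ) + 1) = k

noncomputable def hasEigen {V : Type*} [Fintype V] (G : SimpleGraph V) (μ : ℝ) : Prop :=
  ∃ v : V → ℝ, v ≠ 0 ∧ G.adjMatrix ℝ *ᵥ v = μ • v

section Aux
variable {V : Type*} [Fintype V] (G : SimpleGraph V)

noncomputable def incMat : Matrix V G.edgeSet ℝ :=
  Matrix.of fun a e => if a ∈ (e : Sym2 V) then 1 else 0

lemma edge_eq {e : G.edgeSet} {a b : V} (hab : a ≠ b) (ha : a ∈ (e : Sym2 V))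
    (hb : b ∈ (e : Sym2 V)) : (e : Sym2 V) = s(a, b) :=
  (Sym2.mem_and_mem_iff hab).1 ⟨ha, hb⟩

lemma incCount {r : ℕ} (hreg : G.IsRegularOfDegree r) (a : V) :
    (univ.filter (fun e : G.edgeSet => a ∈ (e : Sym2 V))).card = r := by
  classical
  rw [← hreg a, ← G.card_incidenceFinset_eq_degree]
  refine Finset.card_bij (fun (e : G.edgeSet) _ => (e : Sym2 V)) ?_ ?_ ?_
  · intro e he
    simp only [mem_filter, mem_univ, true_and] at he
    rw [mem_incidenceFinset]
    exact ⟨e.2, he⟩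
  · intro e₁ _ e₂ _ h; exact Subtype.ext h
  · intro e he
    rw [mem_incidenceFinset] at he
    exact ⟨⟨e, he.1⟩, by simp [he.2], rfl⟩

lemma hA {r : ℕ} (hreg : G.IsRegularOfDegree r) :
    incMat G * (incMat G)ᵀ = G.adjMatrix ℝ + (r : ℝ) • 1 := by
  classical
  ext a b
  simp only [Matrix.mul_apply, Matrix.transpose_apply, Matrix.add_apply, Matrix.smul_apply,
    Matrix.one_apply, SimpleGraph.adjMatrix_apply, incMat, Matrix.of_apply]
  have : ∀ e : G.edgeSet,
      (if a ∈ (e : Sym2 V) then (1:ℝ) else 0) * (if b ∈ (e : Sym2 V) then (1:ℝ) else 0)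
      = if a ∈ (e : Sym2 V) ∧ b ∈ (e : Sym2 V) then (1:ℝ) else 0 := by
    intro e; split_ifs with h1 h2 h3 <;> simp_all
  rw [Finset.sum_congr rfl fun e _ => this e, Finset.sum_boole]
  by_cases hab : a = b
  · subst hab
    simp only [and_self]
    simp only [G.irrefl, if_false, if_true, smul_eq_mul, mul_one, zero_add]
    exact_mod_cast incCount G hreg a
  · rw [if_neg hab, smul_eq_mul, mul_zero, add_zero]
    by_cases hadj : G.Adj a b
    · rw [if_pos hadj]
      have : (univ.filter (fun e : G.edgeSet => a ∈ (e : Sym2 V) ∧ b ∈ (e : Sym2 V)))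
          = {⟨s(a, b), hadj⟩} := by
        ext e
        simp only [mem_filter, mem_univ, true_and, mem_singleton]
        constructor
        · rintro ⟨ha, hb⟩; exact Subtype.ext (edge_eq G hab ha hb)
        · rintro rfl; simp
      rw [this]; simp
    · rw [if_neg hadj]
      have : (univ.filter (fun e : G.edgeSet => a ∈ (e : Sym2 V) ∧ b ∈ (e : Sym2 V)))
          = ∅ := by
        ext e
        simp only [mem_filter, mem_univ, true_and, notMem_empty, iff_false]
        rintro ⟨ha, hb⟩
        exact hadj (by rw [← SimpleGraph.mem_edgeSet, ← edge_eq G hab ha hb]; exact e.2)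
      rw [this]; simp

lemma edge_rep (e : G.edgeSet) : ∃ x y, G.Adj x y ∧ (e : Sym2 V) = s(x, y) := by
  obtain ⟨e, he⟩ := e
  induction e with
  | _ x y => exact ⟨x, y, he, rfl⟩

lemma hB : (incMat G)ᵀ * incMat G = (G.lineGraph).adjMatrix ℝ + (2 : ℝ) • 1 := by
  classical
  ext e e'
  simp only [Matrix.mul_apply, Matrix.transpose_apply, Matrix.add_apply, Matrix.smul_apply,
    Matrix.one_apply, SimpleGraph.adjMatrix_apply, incMat, Matrix.of_apply]
  have : ∀ a : V,
      (if a ∈ (e : Sym2 V) then (1:ℝ) else 0) * (if a ∈ (e' : Sym2 V) then (1:ℝ) else 0)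
      = if a ∈ (e : Sym2 V) ∧ a ∈ (e' : Sym2 V) then (1:ℝ) else 0 := by
    intro a; split_ifs with h1 h2 h3 <;> simp_all
  rw [Finset.sum_congr rfl fun a _ => this a, Finset.sum_boole]
  by_cases hee : e = e'
  · subst hee
    simp only [and_self, (G.lineGraph).irrefl, if_false, if_true, smul_eq_mul, mul_one, zero_add]
    obtain ⟨x, y, hadj, hxy⟩ := edge_rep G e
    have : (univ.filter (fun a : V => a ∈ (e : Sym2 V))) = {x, y} := by
      ext a; simp [hxy, Sym2.mem_iff]
    rw [this, Finset.card_pair (G.ne_of_adj hadj)]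
    norm_num
  · rw [if_neg hee, smul_eq_mul, mul_zero, add_zero]
    by_cases hadj : (G.lineGraph).Adj e e'
    · rw [if_pos hadj]
      obtain ⟨hne, u, hu1, hu2⟩ := lineGraph_adj_iff_exists.1 hadj
      have : (univ.filter (fun a : V => a ∈ (e : Sym2 V) ∧ a ∈ (e' : Sym2 V))) = {u} := by
        ext a
        simp only [mem_filter, mem_univ, true_and, mem_singleton]
        constructor
        · rintro ⟨ha1, ha2⟩
          by_contra hau
          exact hne (Subtype.ext ((edge_eq G hau ha1 hu1).trans (edge_eq G hau ha2 hu2).symm))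
        · rintro rfl; exact ⟨hu1, hu2⟩
      rw [this]; simp
    · rw [if_neg hadj]
      have : (univ.filter (fun a : V => a ∈ (e : Sym2 V) ∧ a ∈ (e' : Sym2 V))) = ∅ := by
        ext a
        simp only [mem_filter, mem_univ, true_and, notMem_empty, iff_false]
        rintro ⟨ha1, ha2⟩
        exact hadj (lineGraph_adj_iff_exists.2 ⟨hee, a, ha1, ha2⟩)
      rw [this]; simp

lemma lineDeg {r : ℕ} (hreg : G.IsRegularOfDegree r) (e : G.edgeSet) :
    ((G.lineGraph).neighborFinset e).card = 2 * r - 2 := by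
  classical
  obtain ⟨x, y, hadj, hxy⟩ := edge_rep G e
  set A := univ.filter (fun e' : G.edgeSet => x ∈ (e' : Sym2 V)) with hAdef
  set B := univ.filter (fun e' : G.edgeSet => y ∈ (e' : Sym2 V)) with hBdef
  have hxyne : x ≠ y := G.ne_of_adj hadj
  have hEq : (G.lineGraph).neighborFinset e = (A ∪ B).erase e := by
    ext e'
    simp only [SimpleGraph.mem_neighborFinset, lineGraph_adj_iff_exists, mem_erase, mem_union,
      hAdef, hBdef, mem_filter, mem_univ, true_and]
    constructor
    · rintro ⟨hne, u, hu1, hu2⟩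
      refine ⟨Ne.symm hne, ?_⟩
      rw [hxy] at hu1
      rcases Sym2.mem_iff.1 hu1 with rfl | rfl
      · exact Or.inl hu2
      · exact Or.inr hu2
    · rintro ⟨hne, h | h⟩
      · exact ⟨Ne.symm hne, x, by rw [hxy]; simp, h⟩
      · exact ⟨Ne.symm hne, y, by rw [hxy]; simp, h⟩
  have hAB : A ∩ B = {e} := by
    ext e'
    simp only [hAdef, hBdef, mem_inter, mem_filter, mem_univ, true_and, mem_singleton]
    constructor
    · rintro ⟨h1, h2⟩
      exact Subtype.ext ((edge_eq G hxyne h1 h2).trans hxy.symm)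
    · rintro rfl; rw [hxy]; simp
  have hcardA : A.card = r := incCount G hreg x
  have hcardB : B.card = r := incCount G hreg y
  have hcup : (A ∪ B).card + 1 = r + r := by
    have h := Finset.card_union_add_card_inter A B
    rw [hAB, Finset.card_singleton, hcardA, hcardB] at h
    exact h
  have heAB : e ∈ A ∪ B := by
    rw [Finset.mem_union, hAdef, mem_filter]
    exact Or.inl ⟨mem_univ _, by rw [hxy]; simp⟩
  rw [hEq, Finset.card_erase_of_mem heAB]
  omega

end Aux

theorem stmt8 {V : Type*} [Fintype V] (G : SimpleGraph V) (r : ℕ)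
    (hr : 2 ≤ r) (hconn : G.Connected) (hreg : G.IsRegularOfDegree r)
    (hdm : distMagic G.lineGraph) : hasEigen G (2 - r) := by
  classical
  obtain ⟨f, k, hf⟩ := hdm
  -- two distinct edges exist
  obtain ⟨a⟩ := hconn.nonempty
  have hdeg : 1 < (G.neighborFinset a).card := by
    have : G.degree a = r := hreg a
    rw [SimpleGraph.degree] at this
    omega
  obtain ⟨b₁, hb₁, b₂, hb₂, hbne⟩ := Finset.one_lt_card.1 hdeg
  rw [SimpleGraph.mem_neighborFinset] at hb₁ hb₂
  let e₁ : G.edgeSet := ⟨s(a, b₁), hb₁⟩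
  let e₂ : G.edgeSet := ⟨s(a, b₂), hb₂⟩
  have hene : e₁ ≠ e₂ := by
    intro h
    exact hbne (Sym2.congr_right.1 (Subtype.ext_iff.1 h))
  -- the vector
  set c : ℝ := (k : ℝ) / (2 * (r : ℝ) - 2) with hc
  have hden : 2 * (r : ℝ) - 2 ≠ 0 := by
    have : (2 : ℝ) ≤ (r : ℝ) := by exact_mod_cast hr
    nlinarith
  set v : G.edgeSet → ℝ := fun e => ((f e : ℕ) : ℝ) + 1 - c with hv
  have hvne : v ≠ 0 := by
    intro h
    have h1 : v e₁ = 0 := by rw [h]; rfl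
    have h2 : v e₂ = 0 := by rw [h]; rfl
    have : ((f e₁ : ℕ) : ℝ) = ((f e₂ : ℕ) : ℝ) := by
      simp only [hv] at h1 h2; linarith
    have : (f e₁ : ℕ) = (f e₂ : ℕ) := by exact_mod_cast this
    exact hene (f.injective (Fin.ext this))
  have hC : (G.lineGraph).adjMatrix ℝ *ᵥ v = 0 := by
    funext e
    rw [SimpleGraph.adjMatrix_mulVec_apply]
    simp only [hv]
    rw [Finset.sum_sub_distrib, Finset.sum_const, lineDeg G hreg e]
    have hsum : ∑ e' ∈ (G.lineGraph).neighborFinset e, (((f e' : ℕ) : ℝ) + 1) = (k : ℝ) := by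
      have := hf e
      push_cast [← this]
      exact Finset.sum_congr rfl fun x _ => by ring
    rw [hsum]
    have hcast : ((2 * r - 2 : ℕ) : ℝ) = 2 * (r : ℝ) - 2 := by
      push_cast [Nat.cast_sub (by omega : 2 ≤ 2 * r)]
      ring
    rw [nsmul_eq_mul, hcast, hc]
    field_simp
    rw [Pi.zero_apply, div_self (by intro h; apply hden; linarith), sub_self, mul_zero]
  have hNtN : (incMat G)ᵀ *ᵥ ((incMat G) *ᵥ v) = (2 : ℝ) • v := by
    rw [Matrix.mulVec_mulVec, hB G, Matrix.add_mulVec, hC, zero_add,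
      Matrix.smul_mulVec, Matrix.one_mulVec]
  have hwne : incMat G *ᵥ v ≠ 0 := by
    intro h
    rw [h, Matrix.mulVec_zero] at hNtN
    have : v = 0 := by
      have := hNtN.symm
      rwa [smul_eq_zero, or_iff_right (by norm_num : (2:ℝ) ≠ 0)] at this
    exact hvne this
  have hkey : (G.adjMatrix ℝ + (r : ℝ) • 1) *ᵥ (incMat G *ᵥ v)
      = (2 : ℝ) • (incMat G *ᵥ v) := by
    rw [← hA G hreg, ← Matrix.mulVec_mulVec, hNtN, Matrix.mulVec_smul]
  refine ⟨incMat G *ᵥ v, hwne, ?_⟩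
  rw [Matrix.add_mulVec, Matrix.smul_mulVec, Matrix.one_mulVec] at hkey
  have h2 := eq_sub_of_add_eq hkey
  rw [h2, ← sub_smul]
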